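/- Let n ≥ 1 and let α ∈ ℂⁿ satisfy αᵀα = 0. Let β, β' ∈ ℂⁿ with βᵀα = 0 and β'ᵀα = 0, and κ, κ' ∈ ℂ. Let L and L' be n×n matrices over ℂ((z)) of order ≥ −1 such that every coefficient matrix is skew-symmetric (L_kᵀ = −L_k and L'_kᵀ = −L'_k for all k), L_{−1} = α·βᵀ − β·αᵀ, L'_{−1} = α·β'ᵀ − β'·αᵀ, L_0·α = κ·α and L'_0·α = κ'·α. Then the commutator [L,L'] = L·L' − L'·L has order ≥ −1, all its coefficient matrices are skew-symmetric, and there exist β'' ∈ ℂⁿ and κ'' ∈ ℂ such that [L,L']_{−1} = α·β''ᵀ − β''·αᵀ with β''ᵀα = 0, and [L,L']_0·α = κ''·α. (This is the so(n) case of the theorem that the space of Lax operators is closed under the pointwise commutator, localized at a Tyurin point γ.) -/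

import Mathlib

open Matrix

/-- The matrix of `z^k`-coefficients of a matrix of formal Laurent series. -/
noncomputable def coeffM {n : ℕ} (A : Matrix (Fin n) (Fin n) (LaurentSeries ℂ)) (k : ℤ) :
    Matrix (Fin n) (Fin n) ℂ :=
  fun i j => (A i j).coeff k

/-- `A` has order `≥ m`: all coefficients below `m` vanish. -/
def ordGE {n : ℕ} (A : Matrix (Fin n) (Fin n) (LaurentSeries ℂ)) (m : ℤ) : Prop :=
  ∀ k : ℤ, k < m → coeffM A k = 0

namespace LaxAux

/-- Coefficient of a product of Laurent series of order ≥ -1. -/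
lemma coeff_mul_bdd (f g : LaurentSeries ℂ)
    (hf : ∀ p : ℤ, p < -1 → f.coeff p = 0) (hg : ∀ q : ℤ, q < -1 → g.coeff q = 0) (k : ℤ) :
    (f * g).coeff k = ∑ p ∈ Finset.Icc (-1 : ℤ) (k + 1), f.coeff p * g.coeff (k - p) := by
  classical
  rw [HahnSeries.coeff_mul]
  set emb : ℤ ↪ ℤ × ℤ := ⟨fun p => (p, k - p), fun a b h => by simpa using congrArg Prod.fst h⟩
  have hsub : Finset.antidiagonal f.isPWO_support g.isPWO_support k ⊆
      (Finset.Icc (-1 : ℤ) (k + 1)).map emb := by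
    rintro ⟨p, q⟩ hpq
    rw [Finset.mem_antidiagonal] at hpq
    obtain ⟨hp, hq, hk⟩ := hpq
    have hp1 : -1 ≤ p := by
      by_contra h
      exact hp (hf p (by omega))
    have hq1 : -1 ≤ q := by
      by_contra h
      exact hq (hg q (by omega))
    rw [Finset.mem_map]
    refine ⟨p, Finset.mem_Icc.mpr ⟨hp1, by omega⟩, ?_⟩
    simp only [emb, Function.Embedding.coeFn_mk]
    exact Prod.ext rfl (by show k - p = q; omega)
  rw [Finset.sum_subset hsub ?_, Finset.sum_map]
  · rfl
  · rintro ⟨p, q⟩ hmem hnot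
    rw [Finset.mem_map] at hmem
    obtain ⟨a, _, ha⟩ := hmem
    change (a, k - a) = (p, q) at ha
    simp only [emb, Function.Embedding.coeFn_mk, Prod.mk.injEq] at ha
    obtain ⟨rfl, rfl⟩ := ha
    rw [Finset.mem_antidiagonal] at hnot
    push_neg at hnot
    by_cases hp : f.coeff a = 0
    · rw [hp, zero_mul]
    · by_cases hq : g.coeff (k - a) = 0
      · rw [hq, mul_zero]
      · exact absurd (by omega : a + (k - a) = k) (hnot hp hq)

lemma coeffM_mul {n : ℕ} (A B : Matrix (Fin n) (Fin n) (LaurentSeries ℂ))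
    (hA : ordGE A (-1)) (hB : ordGE B (-1)) (k : ℤ) :
    coeffM (A * B) k = ∑ p ∈ Finset.Icc (-1 : ℤ) (k + 1), coeffM A p * coeffM B (k - p) := by
  ext i j
  show ((A * B) i j).coeff k = _
  rw [Matrix.mul_apply]
  rw [show ((∑ l, A i l * B l j).coeff k) = ∑ l, (A i l * B l j).coeff k from
    map_sum (HahnSeries.coeff.addMonoidHom k) _ _]
  have hAc : ∀ (i l : Fin n) (p : ℤ), p < -1 → (A i l).coeff p = 0 := by
    intro i l p hp
    have := hA p hp
    exact congrFun (congrFun this i) l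
  have hBc : ∀ (i l : Fin n) (p : ℤ), p < -1 → (B i l).coeff p = 0 := by
    intro i l p hp
    have := hB p hp
    exact congrFun (congrFun this i) l
  calc ∑ l, (A i l * B l j).coeff k
      = ∑ l, ∑ p ∈ Finset.Icc (-1 : ℤ) (k + 1), (A i l).coeff p * (B l j).coeff (k - p) := by
        refine Finset.sum_congr rfl fun l _ => ?_
        exact coeff_mul_bdd _ _ (hAc i l) (hBc l j) k
    _ = ∑ p ∈ Finset.Icc (-1 : ℤ) (k + 1), ∑ l, (A i l).coeff p * (B l j).coeff (k - p) :=
        Finset.sum_comm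
    _ = _ := by
        rw [Matrix.sum_apply]
        refine Finset.sum_congr rfl fun p _ => ?_
        rw [Matrix.mul_apply]
        rfl

lemma vecMulVec_mul {n : ℕ} (a b : Fin n → ℂ) (M : Matrix (Fin n) (Fin n) ℂ) :
    vecMulVec a b * M = vecMulVec a (Mᵀ *ᵥ b) := by
  ext i j
  simp only [Matrix.mul_apply, vecMulVec_apply, mulVec, dotProduct, transpose_apply]
  rw [Finset.mul_sum]
  exact Finset.sum_congr rfl fun l _ => by ring

lemma mul_vecMulVec {n : ℕ} (M : Matrix (Fin n) (Fin n) ℂ) (a b : Fin n → ℂ) :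
    M * vecMulVec a b = vecMulVec (M *ᵥ a) b := by
  ext i j
  simp only [Matrix.mul_apply, vecMulVec_apply, mulVec, dotProduct]
  rw [Finset.sum_mul]
  exact Finset.sum_congr rfl fun l _ => by ring

lemma vecMulVec_mulVec {n : ℕ} (a b v : Fin n → ℂ) :
    vecMulVec a b *ᵥ v = (b ⬝ᵥ v) • a := by
  ext i
  simp only [mulVec, dotProduct, vecMulVec_apply, Pi.smul_apply, smul_eq_mul]
  rw [Finset.sum_mul]
  exact Finset.sum_congr rfl fun l _ => by ring

lemma skew_quad_zero {n : ℕ} (M : Matrix (Fin n) (Fin n) ℂ) (hM : Mᵀ = -M) (a : Fin n → ℂ) :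
    a ⬝ᵥ (M *ᵥ a) = 0 := by
  have h1 : a ⬝ᵥ (M *ᵥ a) = (Mᵀ *ᵥ a) ⬝ᵥ a := by
    rw [Matrix.dotProduct_mulVec, ← Matrix.mulVec_transpose]
  have h2 : (Mᵀ *ᵥ a) ⬝ᵥ a = -(a ⬝ᵥ (M *ᵥ a)) := by
    rw [hM, Matrix.neg_mulVec, neg_dotProduct, dotProduct_comm]
  linear_combination (h1.trans h2) / 2

lemma vecMulVec_mul_vecMulVec {n : ℕ} (a b c d : Fin n → ℂ) :
    vecMulVec a b * vecMulVec c d = (b ⬝ᵥ c) • vecMulVec a d := by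
  ext i j
  simp only [Matrix.mul_apply, vecMulVec_apply, Matrix.smul_apply, dotProduct, smul_eq_mul]
  rw [Finset.sum_mul]
  exact Finset.sum_congr rfl fun l _ => by ring

lemma vecMulVec_neg_right {n : ℕ} (a v : Fin n → ℂ) :
    vecMulVec a (-v) = -vecMulVec a v := by
  ext i j; simp [vecMulVec_apply]

lemma vecMulVec_smul_right {n : ℕ} (a v : Fin n → ℂ) (c : ℂ) :
    vecMulVec a (c • v) = c • vecMulVec a v := by
  ext i j; simp [vecMulVec_apply]; ring

lemma vecMulVec_smul_left {n : ℕ} (a v : Fin n → ℂ) (c : ℂ) :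
    vecMulVec (c • a) v = c • vecMulVec a v := by
  ext i j; simp [vecMulVec_apply]; ring

lemma vecMulVec_expand_right {n : ℕ} (a u v w x : Fin n → ℂ) (c c' : ℂ) :
    vecMulVec a (u - v + c • w - c' • x) =
      vecMulVec a u - vecMulVec a v + c • vecMulVec a w - c' • vecMulVec a x := by
  ext i j; simp [vecMulVec_apply]; ring

lemma vecMulVec_expand_left {n : ℕ} (a u v w x : Fin n → ℂ) (c c' : ℂ) :
    vecMulVec (u - v + c • w - c' • x) a =
      vecMulVec u a - vecMulVec v a + c • vecMulVec w a - c' • vecMulVec x a := by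
  ext i j; simp [vecMulVec_apply]; ring

end LaxAux

open LaxAux in
/-- The `so(n)` case of closedness of the space of Lax operators under the pointwise
commutator, localized at a Tyurin point. -/
theorem lax_so_commutator_closed (n : ℕ) (hn : 1 ≤ n)
    (α : Fin n → ℂ) (hαα : α ⬝ᵥ α = 0)
    (β β' : Fin n → ℂ) (hβα : β ⬝ᵥ α = 0) (hβ'α : β' ⬝ᵥ α = 0) (κ κ' : ℂ)
    (L L' : Matrix (Fin n) (Fin n) (LaurentSeries ℂ))
    (hLord : ordGE L (-1)) (hL'ord : ordGE L' (-1))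
    (hLskew : ∀ k : ℤ, (coeffM L k)ᵀ = -coeffM L k)
    (hL'skew : ∀ k : ℤ, (coeffM L' k)ᵀ = -coeffM L' k)
    (hLm1 : coeffM L (-1) = vecMulVec α β - vecMulVec β α)
    (hL'm1 : coeffM L' (-1) = vecMulVec α β' - vecMulVec β' α)
    (hL0 : (coeffM L 0).mulVec α = κ • α)
    (hL'0 : (coeffM L' 0).mulVec α = κ' • α) :
    ordGE (L * L' - L' * L) (-1) ∧
    (∀ k : ℤ, (coeffM (L * L' - L' * L) k)ᵀ = -coeffM (L * L' - L' * L) k) ∧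
    ∃ (β'' : Fin n → ℂ) (κ'' : ℂ),
      coeffM (L * L' - L' * L) (-1) = vecMulVec α β'' - vecMulVec β'' α ∧
      β'' ⬝ᵥ α = 0 ∧
      (coeffM (L * L' - L' * L) 0).mulVec α = κ'' • α := by
  classical
  -- series-level skew-symmetry
  have skew_series : ∀ (M : Matrix (Fin n) (Fin n) (LaurentSeries ℂ)),
      (∀ k : ℤ, (coeffM M k)ᵀ = -coeffM M k) → Mᵀ = -M := by
    intro M hM
    ext i j k
    have h := congrFun (congrFun (hM k) i) j
    simpa [coeffM, Matrix.transpose_apply, Matrix.neg_apply, HahnSeries.coeff_neg] using h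
  have hLs : Lᵀ = -L := skew_series L hLskew
  have hL's : L'ᵀ = -L' := skew_series L' hL'skew
  set C := L * L' - L' * L with hCdef
  have hCt : Cᵀ = -C := by
    rw [hCdef, transpose_sub, transpose_mul, transpose_mul, hLs, hL's]
    simp only [Matrix.neg_mul, Matrix.mul_neg, neg_neg]
    rw [neg_sub]
  have hskewC : ∀ k : ℤ, (coeffM C k)ᵀ = -coeffM C k := by
    intro k
    ext i j
    have h := congrFun (congrFun hCt i) j
    have h2 := congrArg (fun f => f.coeff k) h
    simpa [coeffM, Matrix.transpose_apply, Matrix.neg_apply, HahnSeries.coeff_neg] using h2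
  -- coefficients of the commutator
  have hsubC : ∀ k : ℤ, coeffM C k = coeffM (L * L') k - coeffM (L' * L) k := by
    intro k
    ext i j
    show ((L * L' - L' * L) i j).coeff k = _
    rw [Matrix.sub_apply, HahnSeries.coeff_sub]
    rfl
  have hmul := coeffM_mul L L' hLord hL'ord
  have hmul' := coeffM_mul L' L hL'ord hLord
  -- basic facts
  set B := coeffM L 0 with hBdef
  set B' := coeffM L' 0 with hB'def
  have hBt : Bᵀ = -B := hLskew 0
  have hB't : B'ᵀ = -B' := hL'skew 0
  have hαβ : α ⬝ᵥ β = 0 := by rw [dotProduct_comm]; exact hβα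
  have hαβ' : α ⬝ᵥ β' = 0 := by rw [dotProduct_comm]; exact hβ'α
  -- product of the residues
  have hp : ∀ (b b' : Fin n → ℂ), b ⬝ᵥ α = 0 → α ⬝ᵥ b' = 0 →
      (vecMulVec α b - vecMulVec b α) * (vecMulVec α b' - vecMulVec b' α)
        = -((b ⬝ᵥ b') • vecMulVec α α) := by
    intro b b' hb hb'
    rw [sub_mul, mul_sub, mul_sub, LaxAux.vecMulVec_mul_vecMulVec, LaxAux.vecMulVec_mul_vecMulVec,
      LaxAux.vecMulVec_mul_vecMulVec, LaxAux.vecMulVec_mul_vecMulVec, hb, hαα, hb', zero_smul, zero_smul,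
      zero_smul]
    abel
  -- order ≥ -1
  have hord : ordGE C (-1) := by
    intro k hk
    rw [hsubC, hmul, hmul']
    rcases eq_or_lt_of_le (show k ≤ -2 by omega) with hk2 | hk2
    · subst hk2
      rw [show (-2 : ℤ) + 1 = -1 by norm_num, Finset.Icc_self, Finset.sum_singleton,
        Finset.sum_singleton, show (-2 : ℤ) - -1 = -1 by norm_num, hLm1, hL'm1,
        hp β β' hβα hαβ', hp β' β hβ'α hαβ, dotProduct_comm]
      exact sub_self _
    · rw [Finset.Icc_eq_empty (by omega), Finset.sum_empty, Finset.sum_empty, sub_zero]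
  refine ⟨hord, hskewC, ?_⟩
  -- the coefficient at -1
  have hIcc0 : Finset.Icc (-1 : ℤ) 0 = {-1, 0} := by
    ext x; simp [Finset.mem_Icc]; omega
  have hCm1 : coeffM C (-1) =
      coeffM L (-1) * B' + B * coeffM L' (-1)
        - (coeffM L' (-1) * B + B' * coeffM L (-1)) := by
    rw [hsubC, hmul, hmul', show (-1 : ℤ) + 1 = 0 by norm_num, hIcc0,
      Finset.sum_insert (by decide), Finset.sum_singleton,
      Finset.sum_insert (by decide), Finset.sum_singleton]
    norm_num
    rfl
  set β'' : Fin n → ℂ := B *ᵥ β' - B' *ᵥ β + κ • β' - κ' • β with hβ''def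
  have hBtα : Bᵀ *ᵥ α = -(κ • α) := by rw [hBt, Matrix.neg_mulVec, hL0]
  have hB'tα : B'ᵀ *ᵥ α = -(κ' • α) := by rw [hB't, Matrix.neg_mulVec, hL'0]
  have hgoal1 : coeffM C (-1) = vecMulVec α β'' - vecMulVec β'' α := by
    rw [hCm1, hLm1, hL'm1, hβ''def]
    rw [sub_mul, LaxAux.vecMulVec_mul, LaxAux.vecMulVec_mul, mul_sub, LaxAux.mul_vecMulVec, LaxAux.mul_vecMulVec,
      sub_mul, LaxAux.vecMulVec_mul, LaxAux.vecMulVec_mul, mul_sub, LaxAux.mul_vecMulVec, LaxAux.mul_vecMulVec]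
    rw [hBtα, hB'tα, hL0, hL'0, hBt, hB't, Matrix.neg_mulVec, Matrix.neg_mulVec,
      LaxAux.vecMulVec_neg_right, LaxAux.vecMulVec_neg_right, LaxAux.vecMulVec_neg_right, LaxAux.vecMulVec_neg_right,
      LaxAux.vecMulVec_smul_right, LaxAux.vecMulVec_smul_right, LaxAux.vecMulVec_smul_left, LaxAux.vecMulVec_smul_left,
      LaxAux.vecMulVec_expand_right, LaxAux.vecMulVec_expand_left]
    module
  have hβ''α : β'' ⬝ᵥ α = 0 := by
    have h1 : (B *ᵥ β') ⬝ᵥ α = 0 := by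
      rw [dotProduct_comm, Matrix.dotProduct_mulVec, ← Matrix.mulVec_transpose, hBtα]
      simp [hαβ']
    have h2 : (B' *ᵥ β) ⬝ᵥ α = 0 := by
      rw [dotProduct_comm, Matrix.dotProduct_mulVec, ← Matrix.mulVec_transpose, hB'tα]
      simp [hαβ]
    rw [hβ''def]
    simp [sub_dotProduct, add_dotProduct, smul_dotProduct, h1, h2,
      hβα, hβ'α]
  -- the coefficient at 0
  have hIcc1 : Finset.Icc (-1 : ℤ) 1 = {-1, 0, 1} := by
    ext x; simp [Finset.mem_Icc]; omega
  have hC0 : coeffM C 0 =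
      coeffM L (-1) * coeffM L' 1 + B * B' + coeffM L 1 * coeffM L' (-1)
        - (coeffM L' (-1) * coeffM L 1 + B' * B + coeffM L' 1 * coeffM L (-1)) := by
    rw [hsubC, hmul, hmul', show (0 : ℤ) + 1 = 1 by norm_num, hIcc1,
      Finset.sum_insert (by decide), Finset.sum_insert (by decide), Finset.sum_singleton,
      Finset.sum_insert (by decide), Finset.sum_insert (by decide), Finset.sum_singleton]
    norm_num [add_assoc]
    rfl
  have hres_mulVec : ∀ (b : Fin n → ℂ), b ⬝ᵥ α = 0 →
      (vecMulVec α b - vecMulVec b α) *ᵥ α = 0 := by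
    intro b hb
    rw [Matrix.sub_mulVec, LaxAux.vecMulVec_mulVec, LaxAux.vecMulVec_mulVec, hb, hαα, zero_smul, zero_smul,
      sub_zero]
  have hskew1 : α ⬝ᵥ (coeffM L 1 *ᵥ α) = 0 := skew_quad_zero _ (hLskew 1) α
  have hskew1' : α ⬝ᵥ (coeffM L' 1 *ᵥ α) = 0 := skew_quad_zero _ (hL'skew 1) α
  refine ⟨β'', β ⬝ᵥ (coeffM L' 1 *ᵥ α) - β' ⬝ᵥ (coeffM L 1 *ᵥ α), hgoal1, hβ''α, ?_⟩
  rw [hC0, Matrix.sub_mulVec, Matrix.add_mulVec, Matrix.add_mulVec, Matrix.add_mulVec,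
    Matrix.add_mulVec, ← Matrix.mulVec_mulVec, ← Matrix.mulVec_mulVec, ← Matrix.mulVec_mulVec,
    ← Matrix.mulVec_mulVec, ← Matrix.mulVec_mulVec, ← Matrix.mulVec_mulVec]
  rw [hLm1, hL'm1, hL0, hL'0, Matrix.mulVec_smul, Matrix.mulVec_smul, hL0, hL'0,
    hres_mulVec β' hβ'α, hres_mulVec β hβα, Matrix.mulVec_zero, Matrix.mulVec_zero]
  rw [Matrix.sub_mulVec, Matrix.sub_mulVec, LaxAux.vecMulVec_mulVec, LaxAux.vecMulVec_mulVec,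
    LaxAux.vecMulVec_mulVec, LaxAux.vecMulVec_mulVec, hskew1, hskew1', zero_smul, zero_smul, sub_zero,
    sub_zero]
  rw [smul_smul, smul_smul, sub_smul]
  module
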